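/- There exist divergent formal power series f(x,y) and h(x) over ℂ with h(0)=0, h ≠ 0, such that f(x, s·h(x)) = s·x² in ℂ[[x]] for every s ∈ ℂ. Concretely: take h(x) = x + ⋯ divergent, let φ(x) be the formal power series determined by h(x)φ(x) = x², and set f(x,y) = φ(x)·y. -/

import Mathlib

/-- A one-variable formal series (given by its coefficients) is convergent:
geometric coefficient bounds. -/
def Conv1 (u : ℕ → ℂ) : Prop := ∃ C : ℝ, ∀ p : ℕ, p ≠ 0 → ‖u p‖ ≤ C ^ p

/-- A two-variable formal power series `∑ a i j • xⁱyʲ` (encoded by its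
coefficient function) is convergent: geometric coefficient bounds. -/
def Conv2 (a : ℕ → ℕ → ℂ) : Prop :=
  ∃ C : ℝ, ∀ i j : ℕ, ¬(i = 0 ∧ j = 0) → ‖a i j‖ ≤ C ^ (i + j)

/-- Convergence of a one-variable formal power series. -/
def ConvPS (h : PowerSeries ℂ) : Prop := Conv1 (fun n => PowerSeries.coeff n h)

/-- The `p`-th coefficient of the formal power series `g(s^σ x, s^τ h(x))`,
where `g` is the two-variable series with coefficients `a i j` and `h(0) = 0`. -/
noncomputable def substCoeff (a : ℕ → ℕ → ℂ) (h : PowerSeries ℂ) (σ τ : ℤ) (s : ℂ)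
    (p : ℕ) : ℂ :=
  ∑ i ∈ Finset.range (p + 1), ∑ j ∈ Finset.range (p + 1),
    a i j * PowerSeries.coeff (p - i) (h ^ j) * s ^ (σ * (i : ℤ) + τ * (j : ℤ))

/-- The coefficients of the formal composition `f(x, u(x))` for `u(0) = 0`. -/
noncomputable def comp2 (a : ℕ → ℕ → ℂ) (u : PowerSeries ℂ) (p : ℕ) : ℂ :=
  ∑ i ∈ Finset.range (p + 1), ∑ j ∈ Finset.range (p + 1),
    a i j * PowerSeries.coeff (p - i) (u ^ j)

open PowerSeries Finset

noncomputable section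

def G : ℕ → ℝ := fun n => if n = 0 then 0 else (n : ℝ) ^ (2 * n)

lemma G_nonneg (n : ℕ) : 0 ≤ G n := by
  unfold G; split <;> positivity

def gps : PowerSeries ℂ := PowerSeries.mk fun n => ((G n : ℝ) : ℂ)

lemma gps_coeff (n : ℕ) : PowerSeries.coeff n gps = ((G n : ℝ) : ℂ) := by
  simp [gps]

lemma cc1g : PowerSeries.constantCoeff (1 - gps) = 1 := by
  have := gps_coeff 0
  rw [PowerSeries.coeff_zero_eq_constantCoeff] at this
  simp [this, G]

def ups : PowerSeries ℂ := (1 - gps)⁻¹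

lemma umul : ups * (1 - gps) = 1 :=
  PowerSeries.inv_mul_cancel _ (by rw [cc1g]; exact one_ne_zero)

lemma u0 : PowerSeries.coeff 0 ups = 1 := by
  rw [PowerSeries.coeff_zero_eq_constantCoeff]
  unfold ups
  rw [PowerSeries.constantCoeff_inv, cc1g, inv_one]

lemma urec (n : ℕ) : PowerSeries.coeff (n + 1) ups
    = ∑ k ∈ range (n + 2), PowerSeries.coeff k ups * ((G (n + 1 - k) : ℝ) : ℂ) := by
  have h1 : PowerSeries.coeff (n+1) (ups * (1 - gps)) = 0 := by
    rw [umul]; simp [PowerSeries.coeff_one]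
  rw [mul_sub, mul_one, map_sub, sub_eq_zero] at h1
  rw [h1, PowerSeries.coeff_mul, Finset.Nat.sum_antidiagonal_eq_sum_range_succ_mk]
  exact Finset.sum_congr rfl fun k _ => by rw [gps_coeff]

lemma key (n : ℕ) : (PowerSeries.coeff n ups).im = 0 ∧
    0 ≤ (PowerSeries.coeff n ups).re ∧ G n ≤ (PowerSeries.coeff n ups).re := by
  induction n using Nat.strong_induction_on with
  | _ n IH =>
    match n with
    | 0 => rw [u0]; simp [G]
    | n + 1 =>
      have heq : PowerSeries.coeff (n+1) ups
          = ((∑ k ∈ range (n + 1), (PowerSeries.coeff k ups).re * G (n + 1 - k) : ℝ) : ℂ) := by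
        rw [urec, Finset.sum_range_succ]
        have hlast : PowerSeries.coeff (n+1) ups * ((G (n + 1 - (n+1)) : ℝ) : ℂ) = 0 := by
          simp [G]
        rw [hlast, add_zero]
        push_cast
        refine Finset.sum_congr rfl fun k hk => ?_
        have hk' : k < n + 1 := Finset.mem_range.mp hk
        obtain ⟨him, _, _⟩ := IH k (by omega)
        congr 1
        exact (Complex.ext (by simp) (by simp [him])).symm
      rw [heq]
      have hnn : ∀ k ∈ range (n + 1), 0 ≤ (PowerSeries.coeff k ups).re * G (n + 1 - k) := by
        intro k hk
        have hk' : k < n + 1 := Finset.mem_range.mp hk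
        obtain ⟨_, hre, _⟩ := IH k (by omega)
        exact mul_nonneg hre (G_nonneg _)
      have h0 : (PowerSeries.coeff 0 ups).re * G (n + 1 - 0)
          ≤ ∑ k ∈ range (n + 1), (PowerSeries.coeff k ups).re * G (n + 1 - k) := by
        exact Finset.single_le_sum hnn (Finset.mem_range.mpr (by omega))
      rw [u0] at h0
      refine ⟨by simp, by simpa using Finset.sum_nonneg hnn, ?_⟩
      rw [Complex.ofReal_re]
      simpa using h0

lemma growth (C : ℝ) (e : ℕ) : ∃ n : ℕ, 1 ≤ n ∧ C ^ (n + e) < G n := by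
  refine ⟨⌈|C|⌉₊ + 2 + e, by omega, ?_⟩
  set n : ℕ := ⌈|C|⌉₊ + 2 + e with hn
  have h2 : (2:ℕ) ≤ n := by omega
  have hCn : |C| < (n : ℝ) := by
    calc |C| ≤ (⌈|C|⌉₊ : ℝ) := Nat.le_ceil _
    _ < (n : ℝ) := by exact_mod_cast (by omega : ⌈|C|⌉₊ < n)
  have : G n = (n:ℝ) ^ (2 * n) := by unfold G; simp; omega
  rw [this]
  calc C ^ (n + e) ≤ |C ^ (n + e)| := le_abs_self _
    _ = |C| ^ (n + e) := abs_pow _ _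
    _ < (n:ℝ) ^ (n + e) := by
        apply pow_lt_pow_left₀ hCn (abs_nonneg _) (by omega)
    _ ≤ (n:ℝ) ^ (2 * n) := by
        apply pow_le_pow_right₀ (by exact_mod_cast by omega : (1:ℝ) ≤ (n:ℝ)) (by omega)

lemma coeff_phi (n : ℕ) : PowerSeries.coeff (n+1) (PowerSeries.X * (1 - gps))
    = (if n = 0 then 1 else 0) - ((G n : ℝ) : ℂ) := by
  rw [PowerSeries.coeff_succ_X_mul, map_sub, gps_coeff, PowerSeries.coeff_one]


/-- Example 3.3 (case `(σ,τ)=(0,1)`): there are divergent series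
`f(x,y) = φ(x)·y` and `h(x) = x + ⋯` with `h·φ = x²`, such that
`f(x, s·h(x)) = s·x²` for every `s ∈ ℂ`. -/

theorem counterexample_sigma_zero_tau_one :
    ∃ (h φ : PowerSeries ℂ) (f : ℕ → ℕ → ℂ),
      PowerSeries.constantCoeff h = 0 ∧ h ≠ 0 ∧ PowerSeries.coeff 1 h = 1 ∧
      ¬ ConvPS h ∧ ¬ ConvPS φ ∧ h * φ = PowerSeries.X ^ 2 ∧
      (∀ i j : ℕ, f i j = if j = 1 then PowerSeries.coeff i φ else 0) ∧
      ¬ Conv2 f ∧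
      ∀ (s : ℂ) (p : ℕ), comp2 f (PowerSeries.C s * h) p =
        if p = 2 then s else 0 := by
  refine ⟨PowerSeries.X * ups, PowerSeries.X * (1 - gps),
    fun i j => if j = 1 then PowerSeries.coeff i (PowerSeries.X * (1 - gps)) else 0,
    ?_, ?_, ?_, ?_, ?_, ?_, fun i j => rfl, ?_, ?_⟩
  · simp
  · intro h0
    have h1 : PowerSeries.coeff 1 (PowerSeries.X * ups) = 1 :=
      (PowerSeries.coeff_succ_X_mul 0 ups).trans u0
    rw [h0] at h1
    simp at h1
  · exact (PowerSeries.coeff_succ_X_mul 0 ups).trans u0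
  · rintro ⟨C, hC⟩
    obtain ⟨n, hn1, hgrow⟩ := growth C 1
    have := hC (n + 1) (by omega)
    beta_reduce at this
    rw [PowerSeries.coeff_succ_X_mul] at this
    obtain ⟨_, _, hG⟩ := key n
    have hre : (PowerSeries.coeff n ups).re ≤ ‖PowerSeries.coeff n ups‖ := by
      exact Complex.re_le_norm _
    linarith
  · rintro ⟨C, hC⟩
    obtain ⟨n, hn1, hgrow⟩ := growth C 1
    have := hC (n + 1) (by omega)
    beta_reduce at this
    rw [coeff_phi, if_neg (by omega)] at this
    rw [zero_sub, norm_neg, Complex.norm_real, Real.norm_of_nonneg (G_nonneg n)] at this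
    linarith
  · calc PowerSeries.X * ups * (PowerSeries.X * (1 - gps))
        = PowerSeries.X ^ 2 * (ups * (1 - gps)) := by ring
      _ = PowerSeries.X ^ 2 := by rw [umul, mul_one]
  · rintro ⟨C, hC⟩
    obtain ⟨n, hn1, hgrow⟩ := growth C 2
    have := hC (n + 1) 1 (by simp)
    beta_reduce at this
    rw [if_pos rfl, coeff_phi, if_neg (by omega)] at this
    rw [zero_sub, norm_neg, Complex.norm_real, Real.norm_of_nonneg (G_nonneg n)] at this
    have : G n ≤ C ^ (n + 2) := this
    linarith
  · intro s p
    unfold comp2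
    rcases Nat.eq_zero_or_pos p with hp | hp
    · subst hp; simp
    have hinner : ∀ i, (∑ j ∈ Finset.range (p + 1),
        (if j = 1 then PowerSeries.coeff i (PowerSeries.X * (1 - gps)) else 0) *
          PowerSeries.coeff (p - i) ((PowerSeries.C s * (PowerSeries.X * ups)) ^ j))
        = PowerSeries.coeff i (PowerSeries.X * (1 - gps)) *
          (s * PowerSeries.coeff (p - i) (PowerSeries.X * ups)) := by
      intro i
      rw [Finset.sum_eq_single 1]
      · rw [if_pos rfl, pow_one, PowerSeries.coeff_C_mul]
      · intro j _ hj; rw [if_neg hj, zero_mul]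
      · intro hmem; exact absurd (Finset.mem_range.mpr (by omega)) hmem
    simp only [hinner]
    have hsum : ∑ i ∈ Finset.range (p + 1),
        PowerSeries.coeff i (PowerSeries.X * (1 - gps)) *
          (s * PowerSeries.coeff (p - i) (PowerSeries.X * ups))
        = s * PowerSeries.coeff p ((PowerSeries.X * (1 - gps)) * (PowerSeries.X * ups)) := by
      rw [PowerSeries.coeff_mul, Finset.Nat.sum_antidiagonal_eq_sum_range_succ_mk,
        Finset.mul_sum]
      exact Finset.sum_congr rfl fun k _ => by ring
    rw [hsum]
    have hX2 : (PowerSeries.X * (1 - gps)) * (PowerSeries.X * ups)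
        = (PowerSeries.X : PowerSeries ℂ) ^ 2 := by
      calc (PowerSeries.X * (1 - gps)) * (PowerSeries.X * ups)
          = PowerSeries.X ^ 2 * (ups * (1 - gps)) := by ring
        _ = PowerSeries.X ^ 2 := by rw [umul, mul_one]
    rw [hX2, PowerSeries.coeff_X_pow]
    split <;> simp



end
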